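/- Let K be a complete discrete valuation field of characteristic p>0 with perfect residue field k. Set F_nK=m_K^{−n}, let F_nH^1(K) be the image of F_nK under the projection K→K/P(K)≅H^1(K) where P(x)=x^p−x, and let ν:Gr_nK→Gr_nH^1(K) be the induced map on graded quotients. Then: if n>0 and p∤n, ν is an isomorphism; if n=0, ν is surjective and Gr_0H^1(K) is isomorphic to H^1(k)=k/P(k); in all other cases (n<0, or n>0 with p∣n), ν is the zero map. -/
import Mathlib


/-- A normalized (additive) discrete valuation on a field `K`; the value `v 0` is junk.
Together with `IsComplete` and `ResiduePerfect` below, this models a complete discrete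
valuation field with perfect residue field. -/
structure DVal (K : Type*) [Field K] where
  v : K → ℤ
  v_mul : ∀ {x y : K}, x ≠ 0 → y ≠ 0 → v (x * y) = v x + v y
  v_add : ∀ {x y : K}, x ≠ 0 → y ≠ 0 → x + y ≠ 0 → min (v x) (v y) ≤ v (x + y)
  exists_uniformizer : ∃ t : K, t ≠ 0 ∧ v t = 1

namespace DVal

variable {K : Type*} [Field K] (V : DVal K)

/-- `x` lies in the valuation ring `𝒪_K`. -/
def integer (x : K) : Prop := x = 0 ∨ 0 ≤ V.v x

/-- `x` lies in the maximal ideal `𝔪_K`. -/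
def maxIdeal (x : K) : Prop := x = 0 ∨ 1 ≤ V.v x

/-- `t` is a uniformizer. -/
def IsUniformizer (t : K) : Prop := t ≠ 0 ∧ V.v t = 1

/-- `x ∈ F_nK = 𝔪_K^{-n}`, i.e. `v(x) ≥ -n` (or `x = 0`). -/
def Fil (n : ℤ) (x : K) : Prop := x = 0 ∨ -n ≤ V.v x

/-- `f` is a Cauchy sequence for `V`. -/
def IsCauchy (f : ℕ → K) : Prop :=
  ∀ N : ℤ, ∃ M : ℕ, ∀ m k : ℕ, M ≤ m → M ≤ k → f m = f k ∨ N ≤ V.v (f m - f k)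

/-- `f` converges to `x` for `V`. -/
def Tendsto (f : ℕ → K) (x : K) : Prop :=
  ∀ N : ℤ, ∃ M : ℕ, ∀ m : ℕ, M ≤ m → f m = x ∨ N ≤ V.v (f m - x)

/-- `K` is complete for `V`. -/
def IsComplete : Prop := ∀ f : ℕ → K, V.IsCauchy f → ∃ x : K, V.Tendsto f x

/-- The residue field `k = 𝒪_K/𝔪_K` is perfect (in characteristic `p`): the Frobenius
is surjective on the residue field. -/
def ResiduePerfect (p : ℕ) : Prop :=
  ∀ x : K, V.integer x → ∃ y : K, V.integer y ∧ V.maxIdeal (x - y ^ p)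

end DVal


namespace DVal

variable {K : Type*} [Field K] (V : DVal K)

lemma v_one' : V.v 1 = 0 := by
  have h := V.v_mul (x := 1) (y := 1) one_ne_zero one_ne_zero
  rw [one_mul] at h; omega

lemma v_neg' {x : K} (hx : x ≠ 0) : V.v (-x) = V.v x := by
  have h1 : V.v (-1 : K) = 0 := by
    have h := V.v_mul (x := (-1 : K)) (y := (-1 : K))
      (neg_ne_zero.mpr one_ne_zero) (neg_ne_zero.mpr one_ne_zero)
    rw [neg_mul_neg, one_mul, V.v_one'] at h; omega
  have h := V.v_mul (x := (-1 : K)) (y := x) (neg_ne_zero.mpr one_ne_zero) hx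
  rw [neg_one_mul] at h; omega

lemma v_inv' {x : K} (hx : x ≠ 0) : V.v x⁻¹ = -V.v x := by
  have h := V.v_mul hx (inv_ne_zero hx)
  rw [mul_inv_cancel₀ hx, V.v_one'] at h; omega

lemma v_pow' {x : K} (hx : x ≠ 0) (n : ℕ) : V.v (x ^ n) = n * V.v x := by
  induction n with
  | zero => simp [V.v_one']
  | succ n ih =>
    rw [pow_succ, V.v_mul (pow_ne_zero n hx) hx, ih]; push_cast; ring

lemma v_add_eq_left' {x y : K} (hx : x ≠ 0) (hy : y ≠ 0) (h : V.v x < V.v y) :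
    x + y ≠ 0 ∧ V.v (x + y) = V.v x := by
  have hxy : x + y ≠ 0 := by
    intro he
    have hxe : x = -y := eq_neg_of_add_eq_zero_left he
    rw [hxe, V.v_neg' hy] at h; omega
  refine ⟨hxy, ?_⟩
  have h1 := V.v_add hx hy hxy
  have h2 : min (V.v (x + y)) (V.v y) ≤ V.v x := by
    have hxe : x + y + -y = x := by ring
    have h3 := V.v_add hxy (neg_ne_zero.mpr hy) (by rw [hxe]; exact hx)
    rw [V.v_neg' hy, hxe] at h3
    exact h3
  omega

lemma v_P_neg' {x : K} (p : ℕ) (hp : 2 ≤ p) (hx : x ≠ 0) (h : V.v x < 0) :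
    x ^ p - x ≠ 0 ∧ V.v (x ^ p - x) = p * V.v x := by
  have hxp : (x : K) ^ p ≠ 0 := pow_ne_zero _ hx
  have hv : V.v (x ^ p) < V.v (-x) := by
    rw [V.v_pow' hx, V.v_neg' hx]; nlinarith
  have := V.v_add_eq_left' hxp (neg_ne_zero.mpr hx) hv
  rw [← sub_eq_add_neg, V.v_pow' hx] at this
  exact this

end DVal

/-- **Lemma `le`**: let `K` be a complete discrete valuation field of characteristic
`p > 0` with perfect residue field `k`, and let `ν : Gr_nK → Gr_nH¹(K)` be the map
induced by the projection `K → K/P(K) = H¹(K)` (where `P(x) = x^p − x` and `F_nH¹(K)`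
is the image of `F_nK`).  Then:
* if `n > 0` and `p ∤ n`, `ν` is an isomorphism (here: injective; surjectivity holds by
  definition of `F_nH¹(K)`) — i.e. if the class of `x ∈ F_nK` lies in `F_{n-1}H¹(K)`
  then `x ∈ F_{n-1}K`;
* if `n = 0`, `ν` is surjective and `Gr_0H¹(K) ≅ H¹(k) = k/P(k)` — i.e. for `x ∈ 𝒪_K`,
  the class of `x` lies in `F_{-1}H¹(K)` iff the residue of `x` lies in `P(k)`;
* otherwise (`n < 0`, or `n > 0` with `p ∣ n`), `ν` is the zero map — i.e. every
  `x ∈ F_nK` has its class in `F_{n-1}H¹(K)`. -/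

theorem stmt12 (p : ℕ) (hp : p.Prime)
    (K : Type*) [Field K] [CharP K p]
    (VK : DVal K) (hcomp : VK.IsComplete) (hperf : VK.ResiduePerfect p) :
    -- `n > 0`, `p ∤ n`: isomorphism
    (∀ n : ℤ, 0 < n → ¬(p : ℤ) ∣ n → ∀ x : K, VK.Fil n x →
      ((∃ y : K, VK.Fil (n - 1) (x - (y ^ p - y))) ↔ VK.Fil (n - 1) x)) ∧
    -- `n = 0`: `Gr_0H¹(K) ≅ k/P(k)`
    (∀ x : K, VK.integer x →
      ((∃ y : K, VK.Fil (-1) (x - (y ^ p - y))) ↔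
        ∃ z : K, VK.integer z ∧ VK.maxIdeal (x - (z ^ p - z)))) ∧
    -- `n < 0`, or `n > 0` with `p ∣ n`: zero map
    (∀ n : ℤ, (n < 0 ∨ (0 < n ∧ (p : ℤ) ∣ n)) → ∀ x : K, VK.Fil n x →
      ∃ y : K, VK.Fil (n - 1) (x - (y ^ p - y))) := by
  have hp2 : 2 ≤ p := hp.two_le
  have hp0 : p ≠ 0 := hp.ne_zero
  refine ⟨?_, ?_, ?_⟩
  · -- Part 1
    intro n hn hpn x hx
    constructor
    · rintro ⟨y, hy⟩
      rcases eq_or_ne x 0 with rfl | hx0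
      · exact Or.inl rfl
      right
      by_contra hlt
      push_neg at hlt
      have hvx : VK.v x = -n := by
        have := hx.resolve_left hx0; omega
      rcases eq_or_ne y 0 with rfl | hy0
      · simp only [zero_pow hp0, sub_zero, sub_self] at hy
        rcases hy with h | h
        · exact hx0 h
        · omega
      rcases eq_or_ne (y ^ p - y) 0 with hP0 | hP0
      · rw [hP0, sub_zero] at hy
        rcases hy with h | h
        · exact hx0 h
        · omega
      rcases lt_or_ge (VK.v y) 0 with hvy | hvy
      · -- v y < 0 : get p ∣ n
        obtain ⟨_, hvP⟩ := VK.v_P_neg' p hp2 hy0 hvy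
        rcases eq_or_ne (x - (y ^ p - y)) 0 with hd0 | hd0
        · have hxe : x = y ^ p - y := sub_eq_zero.mp hd0
          exact hpn ⟨-VK.v y, by rw [mul_neg]; rw [hxe] at hvx; omega⟩
        · have hvd : -(n - 1) ≤ VK.v (x - (y ^ p - y)) := hy.resolve_left hd0
          -- x = (x - P) + P
          have hxe : (y ^ p - y) + (x - (y ^ p - y)) = x := by ring
          have h1 := VK.v_add hP0 hd0 (by rw [hxe]; exact hx0)
          rw [hxe] at h1
          have hvPle : VK.v (y ^ p - y) ≤ -n := by omega
          have h2 := VK.v_add_eq_left' hP0 hd0 (by omega)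
          rw [hxe] at h2
          exact hpn ⟨-VK.v y, by rw [mul_neg]; omega⟩
      · -- v y ≥ 0 : v P ≥ 0 > contradiction
        have hvP : 0 ≤ VK.v (y ^ p - y) := by
          have h1 := VK.v_add (pow_ne_zero p hy0) (neg_ne_zero.mpr hy0)
            (by rw [← sub_eq_add_neg]; exact hP0)
          rw [← sub_eq_add_neg, VK.v_pow' hy0, VK.v_neg' hy0] at h1
          have : 0 ≤ (p : ℤ) * VK.v y := by positivity
          omega
        rcases eq_or_ne (x - (y ^ p - y)) 0 with hd0 | hd0
        · have hxe : x = y ^ p - y := sub_eq_zero.mp hd0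
          rw [hxe] at hvx; omega
        · have hvd : -(n - 1) ≤ VK.v (x - (y ^ p - y)) := hy.resolve_left hd0
          have hxe : (x - (y ^ p - y)) + (y ^ p - y) = x := by ring
          have h1 := VK.v_add hd0 hP0 (by rw [hxe]; exact hx0)
          rw [hxe] at h1
          omega
    · intro h
      exact ⟨0, by simpa [zero_pow hp0] using h⟩
  · -- Part 2
    intro x hxint
    have hFM : ∀ z : K, VK.Fil (-1) z ↔ VK.maxIdeal z := by
      intro z; simp [DVal.Fil, DVal.maxIdeal]
    constructor
    · rintro ⟨y, hy⟩
      refine ⟨y, ?_, (hFM _).mp hy⟩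
      rcases eq_or_ne y 0 with rfl | hy0
      · exact Or.inl rfl
      right
      by_contra hvy
      push_neg at hvy
      obtain ⟨hP0, hvP⟩ := VK.v_P_neg' p hp2 hy0 hvy
      have hvPneg : VK.v (y ^ p - y) < 0 := by nlinarith
      rcases eq_or_ne (x - (y ^ p - y)) 0 with hd0 | hd0
      · have hxe : x = y ^ p - y := sub_eq_zero.mp hd0
        rcases hxint with h | h
        · rw [h] at hxe; exact hP0 hxe.symm
        · rw [hxe] at h; omega
      · have hvd : 1 ≤ VK.v (x - (y ^ p - y)) := by
          have := hy.resolve_left hd0; omega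
        rcases eq_or_ne x 0 with rfl | hx0
        · rw [zero_sub, VK.v_neg' hP0] at hvd; omega
        · have hvx : 0 ≤ VK.v x := hxint.resolve_left hx0
          have hxe : (y ^ p - y) + (x - (y ^ p - y)) = x := by ring
          have h2 := VK.v_add_eq_left' hP0 hd0 (by omega)
          rw [hxe] at h2
          omega
    · rintro ⟨z, _, hz⟩
      exact ⟨z, (hFM _).mpr hz⟩
  · -- Part 3
    rintro n hn x hx
    rcases eq_or_ne x 0 with rfl | hx0
    · exact ⟨0, Or.inl (by simp [zero_pow hp0])⟩
    have hvx : -n ≤ VK.v x := hx.resolve_left hx0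
    rcases hn with hn | ⟨hn, m, hm⟩
    · -- n < 0
      refine ⟨-x, ?_⟩
      have he : x - ((-x) ^ p - (-x)) = -((-x) ^ p) := by ring
      rw [he]
      right
      have hnx : (-x : K) ≠ 0 := neg_ne_zero.mpr hx0
      rw [VK.v_neg' (pow_ne_zero p hnx), VK.v_pow' hnx, VK.v_neg' hx0]
      have h1 : 1 ≤ VK.v x := by omega
      have h2 : (2 : ℤ) * VK.v x ≤ (p : ℤ) * VK.v x := by
        have : (2 : ℤ) ≤ (p : ℤ) := by exact_mod_cast hp2
        nlinarith
      omega
    · -- 0 < n, n = p * m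
      rcases le_or_gt (-(n - 1)) (VK.v x) with hge | hlt
      · exact ⟨0, by rw [zero_pow hp0, sub_zero, sub_zero]; exact Or.inr hge⟩
      have hvx' : VK.v x = -n := by omega
      have hm1 : 1 ≤ m := by nlinarith
      obtain ⟨t, ht0, ht1⟩ := VK.exists_uniformizer
      have hN : (n.toNat : ℤ) = n := Int.toNat_of_nonneg (by omega)
      have hM : (m.toNat : ℤ) = m := Int.toNat_of_nonneg (by omega)
      have hMN : m.toNat * p = n.toNat := by
        have : ((m.toNat * p : ℕ) : ℤ) = (n.toNat : ℤ) := by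
          push_cast [hM, hN]; linarith
        exact_mod_cast this
      have htN : (t ^ n.toNat : K) ≠ 0 := pow_ne_zero _ ht0
      have htM : (t ^ m.toNat : K) ≠ 0 := pow_ne_zero _ ht0
      set u : K := x * t ^ n.toNat with hu
      have hu0 : u ≠ 0 := mul_ne_zero hx0 htN
      have hvu : VK.v u = 0 := by
        rw [hu, VK.v_mul hx0 htN, VK.v_pow' ht0, ht1]; omega
      obtain ⟨w, hwint, hwmax⟩ := hperf u (Or.inr (le_of_eq hvu.symm))
      rcases eq_or_ne w 0 with rfl | hw0
      · exfalso
        rw [zero_pow hp0, sub_zero] at hwmax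
        rcases hwmax with h | h
        · exact hu0 h
        · omega
      refine ⟨w * (t ^ m.toNat)⁻¹, ?_⟩
      have hy0 : w * (t ^ m.toNat)⁻¹ ≠ 0 := mul_ne_zero hw0 (inv_ne_zero htM)
      have hvy : -(n - 1) ≤ VK.v (w * (t ^ m.toNat)⁻¹) := by
        rw [VK.v_mul hw0 (inv_ne_zero htM), VK.v_inv' htM, VK.v_pow' ht0, ht1]
        have hvw : 0 ≤ VK.v w := hwint.resolve_left hw0
        nlinarith
      have he : x - ((w * (t ^ m.toNat)⁻¹) ^ p - w * (t ^ m.toNat)⁻¹)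
          = (u - w ^ p) * (t ^ n.toNat)⁻¹ + w * (t ^ m.toNat)⁻¹ := by
        rw [hu, mul_pow, inv_pow, ← pow_mul, hMN]
        field_simp
        ring
      rw [he]
      rcases eq_or_ne (u - w ^ p) 0 with ha0 | ha0
      · rw [ha0, zero_mul, zero_add]
        exact Or.inr hvy
      · have hva : -(n - 1) ≤ VK.v ((u - w ^ p) * (t ^ n.toNat)⁻¹) := by
          have hvuw : 1 ≤ VK.v (u - w ^ p) := hwmax.resolve_left ha0
          rw [VK.v_mul ha0 (inv_ne_zero htN), VK.v_inv' htN, VK.v_pow' ht0, ht1]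
          omega
        have haI : (u - w ^ p) * (t ^ n.toNat)⁻¹ ≠ 0 :=
          mul_ne_zero ha0 (inv_ne_zero htN)
        rcases eq_or_ne ((u - w ^ p) * (t ^ n.toNat)⁻¹ + w * (t ^ m.toNat)⁻¹) 0
          with hs0 | hs0
        · exact Or.inl hs0
        · refine Or.inr ?_
          have h1 := VK.v_add haI hy0 hs0
          omega
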